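/- Let I ≥ 2 and let F be a saturated fraction of the I × I design (a finset F of Fin I × Fin I with card F = 2I − 1 whose model rows are linearly independent over ℝ). Then every margin of F is positive: m_A(i) ≥ 1 for all i ∈ Fin I and m_B(j) ≥ 1 for all j ∈ Fin I. -/

import Mathlib

/-- The model row of a design point `(i, j)` under the simple effect model:
a `1` (for the grand mean), the indicators of the first `I - 1` row levels,
and the indicators of the first `J - 1` column levels. -/
def modelRow {I J : ℕ} (p : Fin I × Fin J) :
    ℝ × (Fin (I - 1) → ℝ) × (Fin (J - 1) → ℝ) :=
  (1,
   fun a => if (p.1 : ℕ) = (a : ℕ) then 1 else 0,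
   fun b => if (p.2 : ℕ) = (b : ℕ) then 1 else 0)

lemma aux_ker {I : ℕ} (hI : 2 ≤ I) (F : Finset (Fin I × Fin I)) (hcard : F.card = 2 * I - 1)
    (hsat : LinearIndependent ℝ (fun p : F => modelRow p.1))
    (φ : (ℝ × (Fin (I - 1) → ℝ) × (Fin (I - 1) → ℝ)) →ₗ[ℝ] ℝ)
    (hφ : φ ≠ 0) (hvan : ∀ p ∈ F, φ (modelRow p) = 0) : False := by
  set V := ℝ × (Fin (I - 1) → ℝ) × (Fin (I - 1) → ℝ)
  have hker : LinearMap.ker φ ≠ ⊤ := by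
    intro h
    apply hφ
    apply LinearMap.ext
    intro x
    have : x ∈ LinearMap.ker φ := h ▸ Submodule.mem_top
    simpa using this
  have hlt : Module.finrank ℝ (LinearMap.ker φ) < Module.finrank ℝ V :=
    Submodule.finrank_lt hker
  have hV : Module.finrank ℝ V = 2 * I - 1 := by
    simp [V, Module.finrank_prod, Module.finrank_pi]
    omega
  -- vectors in the kernel
  have hli : LinearIndependent ℝ (fun p : F => (⟨modelRow p.1, hvan p.1 p.2⟩ :
      LinearMap.ker φ)) := by
    apply LinearIndependent.of_comp (LinearMap.ker φ).subtype
    exact hsat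
  have hle := hli.fintype_card_le_finrank
  rw [Fintype.card_coe, hcard] at hle
  rw [hV] at hlt
  omega

lemma row_hit {I : ℕ} (hI : 2 ≤ I) (F : Finset (Fin I × Fin I)) (hcard : F.card = 2 * I - 1)
    (hsat : LinearIndependent ℝ (fun p : F => modelRow p.1))
    (i : Fin I) (hmiss : ∀ p ∈ F, p.1 ≠ i) : False := by
  have hval : ∀ p ∈ F, (p.1 : ℕ) ≠ (i : ℕ) := fun p hp he => hmiss p hp (Fin.ext he)
  set π : (ℝ × (Fin (I - 1) → ℝ) × (Fin (I - 1) → ℝ)) →ₗ[ℝ] (Fin (I - 1) → ℝ) :=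
    (LinearMap.fst ℝ (Fin (I - 1) → ℝ) (Fin (I - 1) → ℝ)).comp
      (LinearMap.snd ℝ ℝ ((Fin (I - 1) → ℝ) × (Fin (I - 1) → ℝ))) with hπ
  rcases lt_or_ge (i : ℕ) (I - 1) with h | h
  · apply aux_ker hI F hcard hsat ((LinearMap.proj ⟨i, h⟩).comp π)
    · intro h0
      have := LinearMap.congr_fun h0 (0, (fun _ => 1), 0)
      simp [hπ] at this
    · intro p hp
      simp [hπ, modelRow, hval p hp]
  · have hi : (i : ℕ) = I - 1 := by have := i.isLt; omega
    apply aux_ker hI F hcard hsat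
      ((LinearMap.fst ℝ ℝ ((Fin (I - 1) → ℝ) × (Fin (I - 1) → ℝ))) -
        (∑ a : Fin (I - 1), (LinearMap.proj a).comp π))
    · intro h0
      have := LinearMap.congr_fun h0 (1, 0, 0)
      simp [hπ] at this
    · intro p hp
      have hlt : (p.1 : ℕ) < I - 1 := by
        have h1 := p.1.isLt
        have h2 := hval p hp
        omega
      have key : ∀ a : Fin (I - 1), ((p.1 : ℕ) = (a : ℕ)) ↔ (a = ⟨(p.1 : ℕ), hlt⟩) := by
        intro a
        constructor
        · intro h'; exact Fin.ext h'.symm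
        · intro h'; rw [h']
      simp [hπ, modelRow, LinearMap.sum_apply, key, Finset.sum_ite_eq']

lemma col_hit {I : ℕ} (hI : 2 ≤ I) (F : Finset (Fin I × Fin I)) (hcard : F.card = 2 * I - 1)
    (hsat : LinearIndependent ℝ (fun p : F => modelRow p.1))
    (j : Fin I) (hmiss : ∀ p ∈ F, p.2 ≠ j) : False := by
  have hval : ∀ p ∈ F, (p.2 : ℕ) ≠ (j : ℕ) := fun p hp he => hmiss p hp (Fin.ext he)
  set π : (ℝ × (Fin (I - 1) → ℝ) × (Fin (I - 1) → ℝ)) →ₗ[ℝ] (Fin (I - 1) → ℝ) :=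
    (LinearMap.snd ℝ (Fin (I - 1) → ℝ) (Fin (I - 1) → ℝ)).comp
      (LinearMap.snd ℝ ℝ ((Fin (I - 1) → ℝ) × (Fin (I - 1) → ℝ))) with hπ
  rcases lt_or_ge (j : ℕ) (I - 1) with h | h
  · apply aux_ker hI F hcard hsat ((LinearMap.proj ⟨j, h⟩).comp π)
    · intro h0
      have := LinearMap.congr_fun h0 (0, 0, (fun _ => 1))
      simp [hπ] at this
    · intro p hp
      simp [hπ, modelRow, hval p hp]
  · have hi : (j : ℕ) = I - 1 := by have := j.isLt; omega
    apply aux_ker hI F hcard hsat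
      ((LinearMap.fst ℝ ℝ ((Fin (I - 1) → ℝ) × (Fin (I - 1) → ℝ))) -
        (∑ a : Fin (I - 1), (LinearMap.proj a).comp π))
    · intro h0
      have := LinearMap.congr_fun h0 (1, 0, 0)
      simp [hπ] at this
    · intro p hp
      have hlt : (p.2 : ℕ) < I - 1 := by
        have h1 := p.2.isLt
        have h2 := hval p hp
        omega
      have key : ∀ a : Fin (I - 1), ((p.2 : ℕ) = (a : ℕ)) ↔ (a = ⟨(p.2 : ℕ), hlt⟩) := by
        intro a
        constructor
        · intro h'; exact Fin.ext h'.symm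
        · intro h'; rw [h']
      simp [hπ, modelRow, LinearMap.sum_apply, key, Finset.sum_ite_eq']

/-- Every margin of a saturated fraction of the `I × I` design is positive. -/
theorem margins_pos_of_saturated {I : ℕ} (hI : 2 ≤ I) (F : Finset (Fin I × Fin I))
    (hcard : F.card = 2 * I - 1)
    (hsat : LinearIndependent ℝ (fun p : F => modelRow p.1)) :
    (∀ i : Fin I, 1 ≤ (F.filter fun p => p.1 = i).card) ∧
    (∀ j : Fin I, 1 ≤ (F.filter fun p => p.2 = j).card) := by
  constructor
  · intro i
    by_contra hc
    have h0 : (F.filter fun p => p.1 = i) = ∅ := by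
      rw [← Finset.card_eq_zero]; omega
    exact row_hit hI F hcard hsat i fun p hp =>
      (Finset.filter_eq_empty_iff.mp h0) hp
  · intro j
    by_contra hc
    have h0 : (F.filter fun p => p.2 = j) = ∅ := by
      rw [← Finset.card_eq_zero]; omega
    exact col_hit hI F hcard hsat j fun p hp =>
      (Finset.filter_eq_empty_iff.mp h0) hp
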